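/- The one-time-measurement Jarzynski identity for the internal energy change holds: Σ_i (exp(−β ε_i)/Z_S0)·exp(−β (E(i) − ε_i)) = Z̃/Z_S0 = exp(−β ΔF̃), where ΔF̃ = −β⁻¹ ln(Z̃/Z_S0) is the information free energy difference. -/

import Mathlib

open Matrix Kronecker BigOperators Finset

noncomputable section

/-- Partial trace over the bath (second tensor factor). -/
def ptraceB {n m : ℕ} (X : Matrix (Fin n × Fin m) (Fin n × Fin m) ℂ) :
    Matrix (Fin n) (Fin n) ℂ :=
  Matrix.of fun i i' => ∑ j, X (i, j) (i', j)

/-- Outer product `|v⟩⟨v|`. -/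
def outer {k : ℕ} (v : Fin k → ℂ) : Matrix (Fin k) (Fin k) ℂ :=
  Matrix.vecMulVec v (star v)

/-- Partition function `Z = Tr exp (−β H)` (real part of the trace). -/
def Zpart (β : ℝ) {k : ℕ} (H : Matrix (Fin k) (Fin k) ℂ) : ℝ :=
  (NormedSpace.exp ((-β) • H)).trace.re

/-- Gibbs state `exp (−β H) / Z`. -/
def gibbs (β : ℝ) {k : ℕ} (H : Matrix (Fin k) (Fin k) ℂ) : Matrix (Fin k) (Fin k) ℂ :=
  ((Zpart β H : ℂ)⁻¹) • NormedSpace.exp ((-β) • H)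

/-- The channel `Φ(ρ) = Tr_B [U (ρ ⊗ τB) U†]`. -/
def channel {n m : ℕ} (U : Matrix (Fin n × Fin m) (Fin n × Fin m) ℂ)
    (τB : Matrix (Fin m) (Fin m) ℂ) (ρ : Matrix (Fin n) (Fin n) ℂ) :
    Matrix (Fin n) (Fin n) ℂ :=
  ptraceB (U * (ρ ⊗ₖ τB) * Uᴴ)

lemma Zpart_eq_sum (n : ℕ) (β : ℝ) (HS0 : Matrix (Fin n) (Fin n) ℂ)
    (e : Fin n → Fin n → ℂ) (ε : Fin n → ℝ)
    (he : ∀ i i', ∑ x, (starRingEnd ℂ) (e i x) * e i' x = if i = i' then 1 else 0)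
    (heig : ∀ i, HS0 *ᵥ e i = (ε i : ℂ) • e i) :
    Zpart β HS0 = ∑ i, Real.exp (-β * ε i) := by
  unfold Zpart
  set V : Matrix (Fin n) (Fin n) ℂ := Matrix.of fun x i => e i x with hV
  have hVunit : Vᴴ * V = 1 := by
    ext i i'
    simp [Matrix.mul_apply, conjTranspose_apply, hV, Matrix.one_apply, he i i']
  have hIsU : IsUnit V := by
    rw [Matrix.isUnit_iff_isUnit_det]
    have := congrArg Matrix.det hVunit
    rw [Matrix.det_mul, Matrix.det_one] at this
    rw [mul_comm] at this
    exact IsUnit.of_mul_eq_one _ this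
  have hVinv : V⁻¹ = Vᴴ := Matrix.inv_eq_left_inv hVunit
  have hdiag : HS0 * V = V * Matrix.diagonal (fun i => (ε i : ℂ)) := by
    ext x i
    have := congrFun (heig i) x
    simp [Matrix.mulVec, dotProduct] at this
    simp [Matrix.mul_apply, hV, Matrix.diagonal, this, mul_comm]
  have hconj : HS0 = V * Matrix.diagonal (fun i => (ε i : ℂ)) * V⁻¹ := by
    rw [← hdiag, Matrix.mul_assoc, Matrix.mul_nonsing_inv _ (Matrix.isUnit_iff_isUnit_det _ |>.mp hIsU), Matrix.mul_one]
  have hsm : (-β : ℂ) • (V * Matrix.diagonal (fun i => (ε i : ℂ)) * V⁻¹)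
      = V * Matrix.diagonal (fun i => ((-β * ε i : ℝ) : ℂ)) * V⁻¹ := by
    have h2 : Matrix.diagonal (fun i => ((-β*ε i : ℝ):ℂ)) = (-β:ℂ) • Matrix.diagonal (fun i => (ε i:ℂ)) := by
      ext i j
      rcases eq_or_ne i j with rfl | h
      · simp [Matrix.diagonal_apply]
      · simp [Matrix.diagonal_apply, h]
    rw [h2, Matrix.mul_smul, Matrix.smul_mul]
  have : NormedSpace.exp ((-β) • HS0)
      = V * Matrix.diagonal (fun i => Complex.exp ((-β * ε i : ℝ) : ℂ)) * V⁻¹ := by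
    rw [hconj]
    rw [show ((-β : ℝ) • (V * Matrix.diagonal (fun i => (ε i : ℂ)) * V⁻¹)) = (-β : ℂ) • (V * Matrix.diagonal (fun i => (ε i : ℂ)) * V⁻¹) by simp]
    rw [hsm, Matrix.exp_conj V _ hIsU, Matrix.exp_diagonal]
    rw [Pi.exp_def]
    simp only [← Complex.exp_eq_exp_ℂ]
  rw [this]
  obtain ⟨u, hu⟩ := hIsU
  rw [← hu, ← Matrix.coe_units_inv, Matrix.trace_units_conj]
  simp only [Matrix.trace_diagonal]
  rw [Complex.re_sum]
  refine Finset.sum_congr rfl fun i _ => ?_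
  rw [Complex.exp_ofReal_re]

theorem otm_jarzynski_energy
    (n m : ℕ) (hn : 1 ≤ n) (hm : 1 ≤ m)
    (β : ℝ) (hβ : 0 < β)
    (HS0 HSt : Matrix (Fin n) (Fin n) ℂ)
    (hHS0 : HS0.IsHermitian) (hHSt : HSt.IsHermitian)
    (HB : Matrix (Fin m) (Fin m) ℂ) (hHB : HB.IsHermitian)
    (e : Fin n → Fin n → ℂ) (ε : Fin n → ℝ)
    (he : ∀ i i', ∑ x, (starRingEnd ℂ) (e i x) * e i' x = if i = i' then 1 else 0)
    (heig : ∀ i, HS0 *ᵥ e i = (ε i : ℂ) • e i)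
    (U : Matrix (Fin n × Fin m) (Fin n × Fin m) ℂ)
    (hU : U ∈ Matrix.unitaryGroup (Fin n × Fin m) ℂ)
    (E : Fin n → ℝ)
    (hE : ∀ i, E i = ((HSt * channel U (gibbs β HB) (outer (e i))).trace).re)
    (Zt : ℝ) (hZt : Zt = ∑ i, Real.exp (-(β * E i)))
    (ΔFt : ℝ) (hΔFt : ΔFt = -(β⁻¹ * Real.log (Zt / Zpart β HS0))) :
    ∑ i, (Real.exp (-(β * ε i)) / Zpart β HS0) * Real.exp (-(β * (E i - ε i)))
        = Zt / Zpart β HS0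
      ∧ Zt / Zpart β HS0 = Real.exp (-(β * ΔFt)) := by
  have hZ := Zpart_eq_sum n β HS0 e ε he heig
  have hne : (Finset.univ : Finset (Fin n)).Nonempty := by
    have : Nonempty (Fin n) := Fin.pos_iff_nonempty.mp hn
    exact Finset.univ_nonempty
  have hZpos : 0 < Zpart β HS0 := by
    rw [hZ]; exact Finset.sum_pos (fun i _ => Real.exp_pos _) hne
  have hZtpos : 0 < Zt := by
    rw [hZt]; exact Finset.sum_pos (fun i _ => Real.exp_pos _) hne
  constructor
  · rw [hZt, Finset.sum_div]
    refine Finset.sum_congr rfl fun i _ => ?_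
    rw [div_mul_eq_mul_div, ← Real.exp_add]
    congr 2
    ring
  · rw [hΔFt, show -(β * -(β⁻¹ * Real.log (Zt / Zpart β HS0))) = Real.log (Zt / Zpart β HS0) by
      field_simp]
    rw [Real.exp_log (div_pos hZtpos hZpos)]
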